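/- Let U' and U'' be unitary operators on complex Hilbert spaces K' and K''. If (U, i', i''; K) and (Ũ, ĩ', ĩ''; K̃) are two minimal AA-unitary couplings of (U',K') and (U'',K'') with the same associated intertwiner, i.e. (i'')* ∘ i' = (ĩ'')* ∘ ĩ' as operators K' → K'', then the couplings are unitarily equivalent: there exists a unitary operator τ : K → K̃ with τ∘U = Ũ∘τ, τ∘i' = ĩ' and τ∘i'' = ĩ''. -/

import Mathlib

open ContinuousLinearMap

section Aux
variable {K' K'' K Kt : Type*}
    [NormedAddCommGroup K'] [InnerProductSpace ℂ K'] [CompleteSpace K']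
    [NormedAddCommGroup K''] [InnerProductSpace ℂ K''] [CompleteSpace K'']
    [NormedAddCommGroup K] [InnerProductSpace ℂ K] [CompleteSpace K]
    [NormedAddCommGroup Kt] [InnerProductSpace ℂ Kt] [CompleteSpace Kt]

theorem aux_coupling
    (U' : K' →L[ℂ] K') (U'' : K'' →L[ℂ] K'')
    (U : K →L[ℂ] K)
    (i' : K' →L[ℂ] K) (i'' : K'' →L[ℂ] K)
    (hi' : Isometry i') (hi'' : Isometry i'')
    (hint' : ∀ x : K', i' (U' x) = U (i' x))
    (hint'' : ∀ x : K'', i'' (U'' x) = U (i'' x))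
    (hmin : Dense {x : K | ∃ (a : K') (b : K''), x = i' a + i'' b})
    (Ut : Kt →L[ℂ] Kt)
    (j' : K' →L[ℂ] Kt) (j'' : K'' →L[ℂ] Kt)
    (hj' : Isometry j') (hj'' : Isometry j'')
    (hjint' : ∀ x : K', j' (U' x) = Ut (j' x))
    (hjint'' : ∀ x : K'', j'' (U'' x) = Ut (j'' x))
    (hsame : (adjoint i'').comp i' = (adjoint j'').comp j') :
    ∃ τ : K →L[ℂ] Kt,
      (∀ k, ‖τ k‖ = ‖k‖) ∧
      (∀ k : K, τ (U k) = Ut (τ k)) ∧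
      (∀ x : K', τ (i' x) = j' x) ∧
      (∀ x : K'', τ (i'' x) = j'' x) := by
  have hni' : ∀ a : K', ‖i' a‖ = ‖a‖ := fun a => by
    simpa [dist_eq_norm] using hi'.dist_eq a 0
  have hni'' : ∀ b : K'', ‖i'' b‖ = ‖b‖ := fun b => by
    simpa [dist_eq_norm] using hi''.dist_eq b 0
  have hnj' : ∀ a : K', ‖j' a‖ = ‖a‖ := fun a => by
    simpa [dist_eq_norm] using hj'.dist_eq a 0
  have hnj'' : ∀ b : K'', ‖j'' b‖ = ‖b‖ := fun b => by
    simpa [dist_eq_norm] using hj''.dist_eq b 0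
  -- inner products of cross terms agree
  have hinner : ∀ (a : K') (b : K''), (inner ℂ (i' a) (i'' b) : ℂ) = inner ℂ (j' a) (j'' b) := by
    intro a b
    have h1 : (inner ℂ (adjoint i'' (i' a)) b : ℂ) = inner ℂ (i' a) (i'' b) :=
      ContinuousLinearMap.adjoint_inner_left i'' b (i' a)
    have h2 : (inner ℂ (adjoint j'' (j' a)) b : ℂ) = inner ℂ (j' a) (j'' b) :=
      ContinuousLinearMap.adjoint_inner_left j'' b (j' a)
    have h3 : adjoint i'' (i' a) = adjoint j'' (j' a) := by
      have := congrArg (fun (T : K' →L[ℂ] K'') => T a) hsame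
      simpa using this
    rw [← h1, ← h2, h3]
  -- the norm of sums agrees
  have hkey : ∀ (a : K') (b : K''), ‖i' a + i'' b‖ = ‖j' a + j'' b‖ := by
    intro a b
    have h1 := @norm_add_sq ℂ K _ _ _ (i' a) (i'' b)
    have h2 := @norm_add_sq ℂ Kt _ _ _ (j' a) (j'' b)
    have : ‖i' a + i'' b‖ ^ 2 = ‖j' a + j'' b‖ ^ 2 := by
      rw [h1, h2, hni', hni'', hnj', hnj'', hinner]
    nlinarith [norm_nonneg (i' a + i'' b), norm_nonneg (j' a + j'' b)]
  -- package as linear maps on the product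
  set F : (K' × K'') →ₗ[ℂ] K := (i' : K' →ₗ[ℂ] K).coprod (i'' : K'' →ₗ[ℂ] K) with hF
  set G : (K' × K'') →ₗ[ℂ] Kt := (j' : K' →ₗ[ℂ] Kt).coprod (j'' : K'' →ₗ[ℂ] Kt) with hG
  have hFapp : ∀ p : K' × K'', F p = i' p.1 + i'' p.2 := fun p => rfl
  have hGapp : ∀ p : K' × K'', G p = j' p.1 + j'' p.2 := fun p => rfl
  have hFG : ∀ p, ‖G p‖ = ‖F p‖ := by
    intro p; rw [hFapp, hGapp]; exact (hkey p.1 p.2).symm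
  have hle : LinearMap.ker F ≤ LinearMap.ker G := by
    intro p hp
    rw [LinearMap.mem_ker] at hp ⊢
    have := hFG p
    rw [hp] at this; simpa using this
  -- descend to a linear isometry on the range of F
  let h : ↥(LinearMap.range F) →ₗ[ℂ] Kt :=
    (Submodule.liftQ (LinearMap.ker F) G hle).comp
      (LinearMap.quotKerEquivRange F).symm.toLinearMap
  have happ : ∀ p : K' × K'', h ⟨F p, LinearMap.mem_range_self F p⟩ = G p := by
    intro p
    simp only [h, LinearMap.comp_apply, LinearEquiv.coe_toLinearMap,
      LinearMap.quotKerEquivRange_symm_apply_image, Submodule.liftQ_apply]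
    rfl
  have hnorm : ∀ m : ↥(LinearMap.range F), ‖h m‖ = ‖(m : K)‖ := by
    rintro ⟨x, hx⟩
    obtain ⟨p, rfl⟩ := hx
    rw [happ p]
    exact hFG p
  let hiso : ↥(LinearMap.range F) →ₗᵢ[ℂ] Kt := ⟨h, hnorm⟩
  let e : ↥(LinearMap.range F) →L[ℂ] K := (LinearMap.range F).subtypeL
  have h_e : IsUniformInducing e := isometry_subtype_coe.isUniformInducing
  have h_dense : DenseRange e := by
    have hset : Set.range e = {x : K | ∃ a b, x = i' a + i'' b} := by
      ext x
      constructor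
      · rintro ⟨⟨x, hx⟩, rfl⟩
        obtain ⟨p, rfl⟩ := hx
        exact ⟨p.1, p.2, (hFapp p).symm ▸ rfl⟩
      · rintro ⟨a, b, rfl⟩
        exact ⟨⟨i' a + i'' b, ⟨(a, b), rfl⟩⟩, rfl⟩
    rw [DenseRange, hset]; exact hmin
  let τ : K →L[ℂ] Kt := hiso.toContinuousLinearMap.extend e
  have hτF : ∀ p : K' × K'', τ (F p) = G p := by
    intro p
    have : τ (e ⟨F p, LinearMap.mem_range_self F p⟩) =
        hiso.toContinuousLinearMap ⟨F p, LinearMap.mem_range_self F p⟩ :=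
      ContinuousLinearMap.extend_eq (f := hiso.toContinuousLinearMap) (e := e) h_dense h_e _
    rw [← happ p]; exact this
  have hτnorm : ∀ k : K, ‖τ k‖ = ‖k‖ := by
    intro k
    refine h_dense.induction_on k ?_ ?_
    · exact isClosed_eq (continuous_norm.comp τ.continuous) continuous_norm
    · rintro ⟨x, hx⟩
      obtain ⟨p, rfl⟩ := hx
      show ‖τ (F p)‖ = ‖F p‖
      rw [hτF p]; exact hFG p
  refine ⟨τ, hτnorm, ?_, ?_, ?_⟩
  · intro k
    refine h_dense.induction_on k ?_ ?_
    · exact isClosed_eq (τ.continuous.comp U.continuous) (Ut.continuous.comp τ.continuous)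
    · rintro ⟨x, hx⟩
      obtain ⟨p, rfl⟩ := hx
      show τ (U (F p)) = Ut (τ (F p))
      have hUF : U (F p) = F (U' p.1, U'' p.2) := by
        rw [hFapp, hFapp]
        simp only [map_add, ← hint', ← hint'']
      rw [hUF, hτF, hτF, hGapp, hGapp]
      simp only [map_add, ← hjint', ← hjint'']
  · intro x
    have := hτF (x, 0)
    simpa [hFapp, hGapp] using this
  · intro x
    have := hτF (0, x)
    simpa [hFapp, hGapp] using this
end Aux


/-- **Uniqueness of minimal AA-unitary couplings.**
Two minimal AA-unitary couplings of `(U', K')` and `(U'', K'')` with the same associated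
intertwiner `(i'')* ∘ i' = (ĩ'')* ∘ ĩ'` are unitarily equivalent. -/
theorem stmt_8 {K' K'' K Kt : Type*}
    [NormedAddCommGroup K'] [InnerProductSpace ℂ K'] [CompleteSpace K']
    [NormedAddCommGroup K''] [InnerProductSpace ℂ K''] [CompleteSpace K'']
    [NormedAddCommGroup K] [InnerProductSpace ℂ K] [CompleteSpace K]
    [NormedAddCommGroup Kt] [InnerProductSpace ℂ Kt] [CompleteSpace Kt]
    (U' : K' →L[ℂ] K') (hU' : U' ∈ unitary (K' →L[ℂ] K'))
    (U'' : K'' →L[ℂ] K'') (hU'' : U'' ∈ unitary (K'' →L[ℂ] K''))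
    -- the first minimal AA-unitary coupling `(U, i', i''; K)`
    (U : K →L[ℂ] K) (hU : U ∈ unitary (K →L[ℂ] K))
    (i' : K' →L[ℂ] K) (i'' : K'' →L[ℂ] K)
    (hi' : Isometry i') (hi'' : Isometry i'')
    (hint' : ∀ x : K', i' (U' x) = U (i' x))
    (hint'' : ∀ x : K'', i'' (U'' x) = U (i'' x))
    (hmin : Dense {x : K | ∃ (a : K') (b : K''), x = i' a + i'' b})
    -- the second minimal AA-unitary coupling `(Ũ, ĩ', ĩ''; K̃)`
    (Ut : Kt →L[ℂ] Kt) (hUt : Ut ∈ unitary (Kt →L[ℂ] Kt))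
    (j' : K' →L[ℂ] Kt) (j'' : K'' →L[ℂ] Kt)
    (hj' : Isometry j') (hj'' : Isometry j'')
    (hjint' : ∀ x : K', j' (U' x) = Ut (j' x))
    (hjint'' : ∀ x : K'', j'' (U'' x) = Ut (j'' x))
    (hmint : Dense {x : Kt | ∃ (a : K') (b : K''), x = j' a + j'' b})
    -- the two couplings have the same associated intertwiner
    (hsame : (adjoint i'').comp i' = (adjoint j'').comp j') :
    ∃ τ : K ≃ₗᵢ[ℂ] Kt,
      (∀ k : K, τ (U k) = Ut (τ k)) ∧
      (∀ x : K', τ (i' x) = j' x) ∧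
      (∀ x : K'', τ (i'' x) = j'' x) := by
  obtain ⟨τ₀, hτn, hτU, hτ1, hτ2⟩ :=
    aux_coupling U' U'' U i' i'' hi' hi'' hint' hint'' hmin Ut j' j'' hj' hj'' hjint' hjint'' hsame
  obtain ⟨σ₀, hσn, hσU, hσ1, hσ2⟩ :=
    aux_coupling U' U'' Ut j' j'' hj' hj'' hjint' hjint'' hmint U i' i'' hi' hi'' hint' hint''
      hsame.symm
  have h1 : ∀ k : K, σ₀ (τ₀ k) = k := by
    have : Set.EqOn (⇑σ₀ ∘ ⇑τ₀) id {x : K | ∃ a b, x = i' a + i'' b} := by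
      rintro x ⟨a, b, rfl⟩
      simp [Function.comp, map_add, hτ1, hτ2, hσ1, hσ2]
    have := Continuous.ext_on hmin (σ₀.continuous.comp τ₀.continuous) continuous_id this
    intro k; exact congrFun this k
  have h2 : ∀ k : Kt, τ₀ (σ₀ k) = k := by
    have : Set.EqOn (⇑τ₀ ∘ ⇑σ₀) id {x : Kt | ∃ a b, x = j' a + j'' b} := by
      rintro x ⟨a, b, rfl⟩
      simp [Function.comp, map_add, hτ1, hτ2, hσ1, hσ2]
    have := Continuous.ext_on hmint (τ₀.continuous.comp σ₀.continuous) continuous_id this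
    intro k; exact congrFun this k
  let τe : K ≃ₗᵢ[ℂ] Kt :=
    { toLinearEquiv := LinearEquiv.ofLinear τ₀.toLinearMap σ₀.toLinearMap
        (LinearMap.ext fun x => h2 x) (LinearMap.ext fun x => h1 x)
      norm_map' := hτn }
  have hτe : ∀ k : K, τe k = τ₀ k := fun k => rfl
  exact ⟨τe, fun k => by rw [hτe, hτe, hτU], fun x => by rw [hτe, hτ1],
    fun x => by rw [hτe, hτ2]⟩
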